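/- Let q, ℓ, μ > 0 and define on (0,∞): m(r) = μr³/(q²ℓ² + r²)^{3/2}, 𝓛(r) = 12μℓ³(3q²r² − 2q⁴ℓ²)/(q²ℓ² + r²)^{7/2}, and h(r) = −(q²ℓ² + r²)^{7/2}/(15μr⁶ℓ³). Then for every r > 0 both equations hold: (i) 4ℓ·m'(r)/r² + 𝓛(r)/2 + 2q²/(r⁴·h(r)) = 0; (ii) 2ℓ·m''(r)/r + 𝓛(r)/2 = 0. Moreover the associated electric field E(r) = q/(r²·h(r)) = −15μqr⁴ℓ³/(q²ℓ² + r²)^{7/2} satisfies r³·E(r) → −15μqℓ³ as r → +∞. -/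

import Mathlib

open Filter Topology Set
lemma rpow_half_nat {A : ℝ} (hA : 0 < A) (k : ℕ) : A ^ ((k:ℝ)/2) = Real.sqrt A ^ k := by
  rw [Real.sqrt_eq_rpow, ← Real.rpow_natCast (A ^ ((1:ℝ)/2)) k, ← Real.rpow_mul hA.le]
  ring_nf

lemma hasDeriv_m (c μ : ℝ) (hc : 0 < c) {r : ℝ} (hr : 0 < r) :
    HasDerivAt (fun r => μ * r ^ 3 / (c + r ^ 2) ^ ((3:ℝ)/2))
      (3 * μ * c * r ^ 2 / (c + r ^ 2) ^ ((5:ℝ)/2)) r := by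
  have hA : 0 < c + r ^ 2 := by positivity
  have hs : 0 < Real.sqrt (c + r ^ 2) := Real.sqrt_pos.2 hA
  have hs2 : Real.sqrt (c + r ^ 2) ^ 2 = c + r ^ 2 := Real.sq_sqrt hA.le
  have hu : HasDerivAt (fun r : ℝ => c + r ^ 2) (2 * r) r := by
    simpa using (hasDerivAt_pow 2 r).const_add c
  have hden : HasDerivAt (fun r => (c + r ^ 2) ^ ((3:ℝ)/2))
      (2 * r * ((3:ℝ)/2) * (c + r ^ 2) ^ ((3:ℝ)/2 - 1)) r :=
    hu.rpow_const (Or.inl hA.ne')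
  have hnum : HasDerivAt (fun r : ℝ => μ * r ^ 3) (μ * (3 * r ^ 2)) r := by
    simpa using (hasDerivAt_pow 3 r).const_mul μ
  have hd := hnum.div hden (by positivity)
  refine hd.congr_deriv (Eq.symm ?_)
  have e1 : (c + r ^ 2) ^ ((3:ℝ)/2) = Real.sqrt (c + r ^ 2) ^ 3 := by
    have := rpow_half_nat hA 3; norm_num at this ⊢; exact this
  have e2 : (c + r ^ 2) ^ ((5:ℝ)/2) = Real.sqrt (c + r ^ 2) ^ 5 := by
    have := rpow_half_nat hA 5; norm_num at this ⊢; exact this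
  have e3 : (c + r ^ 2) ^ ((3:ℝ)/2 - 1) = Real.sqrt (c + r ^ 2) ^ 1 := by
    have := rpow_half_nat hA 1; norm_num at this ⊢; exact this
  rw [e1, e2, e3]
  set s := Real.sqrt (c + r ^ 2)
  field_simp
  linear_combination (-μ) * hs2

lemma hasDeriv_m' (c μ : ℝ) (hc : 0 < c) {r : ℝ} (hr : 0 < r) :
    HasDerivAt (fun r => 3 * μ * c * r ^ 2 / (c + r ^ 2) ^ ((5:ℝ)/2))
      (3 * μ * c * r * (2 * c - 3 * r ^ 2) / (c + r ^ 2) ^ ((7:ℝ)/2)) r := by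
  have hA : 0 < c + r ^ 2 := by positivity
  have hs : 0 < Real.sqrt (c + r ^ 2) := Real.sqrt_pos.2 hA
  have hs2 : Real.sqrt (c + r ^ 2) ^ 2 = c + r ^ 2 := Real.sq_sqrt hA.le
  have hu : HasDerivAt (fun r : ℝ => c + r ^ 2) (2 * r) r := by
    simpa using (hasDerivAt_pow 2 r).const_add c
  have hden : HasDerivAt (fun r => (c + r ^ 2) ^ ((5:ℝ)/2))
      (2 * r * ((5:ℝ)/2) * (c + r ^ 2) ^ ((5:ℝ)/2 - 1)) r :=
    hu.rpow_const (Or.inl hA.ne')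
  have hnum : HasDerivAt (fun r : ℝ => 3 * μ * c * r ^ 2) (3 * μ * c * (2 * r)) r := by
    simpa using (hasDerivAt_pow 2 r).const_mul (3 * μ * c)
  have hd := hnum.div hden (by positivity)
  refine hd.congr_deriv (Eq.symm ?_)
  have e1 : (c + r ^ 2) ^ ((5:ℝ)/2) = Real.sqrt (c + r ^ 2) ^ 5 := by
    have := rpow_half_nat hA 5; norm_num at this ⊢; exact this
  have e2 : (c + r ^ 2) ^ ((7:ℝ)/2) = Real.sqrt (c + r ^ 2) ^ 7 := by
    have := rpow_half_nat hA 7; norm_num at this ⊢; exact this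
  have e3 : (c + r ^ 2) ^ ((5:ℝ)/2 - 1) = Real.sqrt (c + r ^ 2) ^ 3 := by
    have := rpow_half_nat hA 3; norm_num at this ⊢; exact this
  rw [e1, e2, e3]
  set s := Real.sqrt (c + r ^ 2)
  field_simp
  linear_combination (-2*μ) * hs2


/-- **Electric source for the Bardeen-class black string.** With
`m(r) = μr³/(q²ℓ² + r²)^{3/2}`, `𝓛(r) = 12μℓ³(3q²r² - 2q⁴ℓ²)/(q²ℓ² + r²)^{7/2}` and
`h(r) = 𝓛_F(r) = -(q²ℓ² + r²)^{7/2}/(15μr⁶ℓ³)`, the purely electric field equations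
`4ℓm'/r² + 𝓛/2 + 2q²/(r⁴h) = 0` and `2ℓm''/r + 𝓛/2 = 0` hold for every `r > 0`; the
electric field `E(r) = q/(r²h(r)) = -15μqr⁴ℓ³/(q²ℓ² + r²)^{7/2}` satisfies
`r³E(r) → -15μqℓ³` as `r → +∞` (non-Coulombic falloff `E ∼ 1/r³`). -/
theorem bardeen_electric_source (q ℓ μ : ℝ) (hq : 0 < q) (hℓ : 0 < ℓ) (hμ : 0 < μ)
    (m 𝓛 h E : ℝ → ℝ)
    (hm : ∀ r, m r = μ * r ^ 3 / (q ^ 2 * ℓ ^ 2 + r ^ 2) ^ ((3:ℝ)/2))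
    (h𝓛 : ∀ r, 𝓛 r = 12 * μ * ℓ ^ 3 * (3 * q ^ 2 * r ^ 2 - 2 * q ^ 4 * ℓ ^ 2) /
        (q ^ 2 * ℓ ^ 2 + r ^ 2) ^ ((7:ℝ)/2))
    (hh : ∀ r, h r = -(q ^ 2 * ℓ ^ 2 + r ^ 2) ^ ((7:ℝ)/2) / (15 * μ * r ^ 6 * ℓ ^ 3))
    (hE : ∀ r, E r = q / (r ^ 2 * h r)) :
    (∀ r > (0:ℝ), 4 * ℓ * deriv m r / r ^ 2 + 𝓛 r / 2 + 2 * q ^ 2 / (r ^ 4 * h r) = 0) ∧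
    (∀ r > (0:ℝ), 2 * ℓ * deriv (deriv m) r / r + 𝓛 r / 2 = 0) ∧
    (∀ r > (0:ℝ),
      E r = -15 * μ * q * r ^ 4 * ℓ ^ 3 / (q ^ 2 * ℓ ^ 2 + r ^ 2) ^ ((7:ℝ)/2)) ∧
    Tendsto (fun r => r ^ 3 * E r) atTop (𝓝 (-15 * μ * q * ℓ ^ 3)) := by
  have hc : (0:ℝ) < q ^ 2 * ℓ ^ 2 := by positivity
  have hmfun : m = fun r => μ * r ^ 3 / (q ^ 2 * ℓ ^ 2 + r ^ 2) ^ ((3:ℝ)/2) := funext hm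
  have hD1 : ∀ r > (0:ℝ), deriv m r =
      3 * μ * (q ^ 2 * ℓ ^ 2) * r ^ 2 / (q ^ 2 * ℓ ^ 2 + r ^ 2) ^ ((5:ℝ)/2) := by
    intro r hr
    rw [hmfun]
    exact (hasDeriv_m (q ^ 2 * ℓ ^ 2) μ hc hr).deriv
  have hD2 : ∀ r > (0:ℝ), deriv (deriv m) r =
      3 * μ * (q ^ 2 * ℓ ^ 2) * r * (2 * (q ^ 2 * ℓ ^ 2) - 3 * r ^ 2) /
        (q ^ 2 * ℓ ^ 2 + r ^ 2) ^ ((7:ℝ)/2) := by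
    intro r hr
    have hev : deriv m =ᶠ[𝓝 r]
        (fun x => 3 * μ * (q ^ 2 * ℓ ^ 2) * x ^ 2 / (q ^ 2 * ℓ ^ 2 + x ^ 2) ^ ((5:ℝ)/2)) := by
      filter_upwards [Ioi_mem_nhds hr] with x hx
      exact hD1 x hx
    rw [hev.deriv_eq]
    exact (hasDeriv_m' (q ^ 2 * ℓ ^ 2) μ hc hr).deriv
  have key : ∀ r > (0:ℝ), 0 < q ^ 2 * ℓ ^ 2 + r ^ 2 := fun r hr => by positivity
  refine ⟨?_, ?_, ?_, ?_⟩
  · intro r hr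
    have hA := key r hr
    have hs : 0 < Real.sqrt (q ^ 2 * ℓ ^ 2 + r ^ 2) := Real.sqrt_pos.2 hA
    have hs2 : Real.sqrt (q ^ 2 * ℓ ^ 2 + r ^ 2) ^ 2 = q ^ 2 * ℓ ^ 2 + r ^ 2 := Real.sq_sqrt hA.le
    have e5 : (q ^ 2 * ℓ ^ 2 + r ^ 2) ^ ((5:ℝ)/2) = Real.sqrt (q ^ 2 * ℓ ^ 2 + r ^ 2) ^ 5 := by
      have := rpow_half_nat hA 5; norm_num at this ⊢; exact this
    have e7 : (q ^ 2 * ℓ ^ 2 + r ^ 2) ^ ((7:ℝ)/2) = Real.sqrt (q ^ 2 * ℓ ^ 2 + r ^ 2) ^ 7 := by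
      have := rpow_half_nat hA 7; norm_num at this ⊢; exact this
    rw [hD1 r hr, h𝓛 r, hh r, e5, e7]
    set s := Real.sqrt (q ^ 2 * ℓ ^ 2 + r ^ 2)
    field_simp
    linear_combination (24*ℓ^3*μ*q^2) * hs2
  · intro r hr
    have hA := key r hr
    have hs : 0 < Real.sqrt (q ^ 2 * ℓ ^ 2 + r ^ 2) := Real.sqrt_pos.2 hA
    have hs2 : Real.sqrt (q ^ 2 * ℓ ^ 2 + r ^ 2) ^ 2 = q ^ 2 * ℓ ^ 2 + r ^ 2 := Real.sq_sqrt hA.le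
    have e7 : (q ^ 2 * ℓ ^ 2 + r ^ 2) ^ ((7:ℝ)/2) = Real.sqrt (q ^ 2 * ℓ ^ 2 + r ^ 2) ^ 7 := by
      have := rpow_half_nat hA 7; norm_num at this ⊢; exact this
    rw [hD2 r hr, h𝓛 r, e7]
    field_simp
    ring
  · intro r hr
    have hA := key r hr
    have hs : 0 < Real.sqrt (q ^ 2 * ℓ ^ 2 + r ^ 2) := Real.sqrt_pos.2 hA
    have e7 : (q ^ 2 * ℓ ^ 2 + r ^ 2) ^ ((7:ℝ)/2) = Real.sqrt (q ^ 2 * ℓ ^ 2 + r ^ 2) ^ 7 := by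
      have := rpow_half_nat hA 7; norm_num at this ⊢; exact this
    rw [hE r, hh r, e7]
    field_simp
  · have hE3 : ∀ r > (0:ℝ), E r = -15 * μ * q * r ^ 4 * ℓ ^ 3 /
        (q ^ 2 * ℓ ^ 2 + r ^ 2) ^ ((7:ℝ)/2) := by
      intro r hr
      have hA := key r hr
      have hs : 0 < Real.sqrt (q ^ 2 * ℓ ^ 2 + r ^ 2) := Real.sqrt_pos.2 hA
      have e7 : (q ^ 2 * ℓ ^ 2 + r ^ 2) ^ ((7:ℝ)/2) = Real.sqrt (q ^ 2 * ℓ ^ 2 + r ^ 2) ^ 7 := by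
        have := rpow_half_nat hA 7; norm_num at this ⊢; exact this
      rw [hE r, hh r, e7]
      field_simp
    have h1 : Tendsto (fun r : ℝ => r ^ 2 / (q ^ 2 * ℓ ^ 2 + r ^ 2)) atTop (𝓝 1) := by
      have hden : Tendsto (fun r : ℝ => q ^ 2 * ℓ ^ 2 + r ^ 2) atTop atTop :=
        tendsto_atTop_add_const_left _ _ (tendsto_pow_atTop two_ne_zero)
      have h0 : Tendsto (fun r : ℝ => q ^ 2 * ℓ ^ 2 / (q ^ 2 * ℓ ^ 2 + r ^ 2)) atTop (𝓝 0) :=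
        Tendsto.div_atTop tendsto_const_nhds hden
      have : Tendsto (fun r : ℝ => 1 - q ^ 2 * ℓ ^ 2 / (q ^ 2 * ℓ ^ 2 + r ^ 2)) atTop (𝓝 (1 - 0)) :=
        tendsto_const_nhds.sub h0
      rw [sub_zero] at this
      refine this.congr (fun r => ?_)
      have hA : (0:ℝ) < q ^ 2 * ℓ ^ 2 + r ^ 2 := by positivity
      field_simp
      ring
    have h2 : Tendsto (fun r : ℝ => (r ^ 2 / (q ^ 2 * ℓ ^ 2 + r ^ 2)) ^ ((7:ℝ)/2)) atTop
        (𝓝 1) := by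
      have hcont : ContinuousAt (fun x : ℝ => x ^ ((7:ℝ)/2)) 1 :=
        Real.continuousAt_rpow_const 1 ((7:ℝ)/2) (Or.inl one_ne_zero)
      have := hcont.tendsto.comp h1
      simpa [Real.one_rpow, Function.comp_def] using this
    have h3 : Tendsto (fun r : ℝ => -15 * μ * q * ℓ ^ 3 *
        (r ^ 2 / (q ^ 2 * ℓ ^ 2 + r ^ 2)) ^ ((7:ℝ)/2)) atTop (𝓝 (-15 * μ * q * ℓ ^ 3)) := by
      have := h2.const_mul (-15 * μ * q * ℓ ^ 3)
      simpa using this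
    refine h3.congr' ?_
    filter_upwards [eventually_gt_atTop (0:ℝ)] with r hr
    have hA := key r hr
    have e1 : (r ^ 2 / (q ^ 2 * ℓ ^ 2 + r ^ 2)) ^ ((7:ℝ)/2) =
        (r ^ 2) ^ ((7:ℝ)/2) / (q ^ 2 * ℓ ^ 2 + r ^ 2) ^ ((7:ℝ)/2) :=
      Real.div_rpow (sq_nonneg r) hA.le _
    have e2 : (r ^ 2 : ℝ) ^ ((7:ℝ)/2) = r ^ 7 := by
      have h' : (0:ℝ) < r ^ 2 := by positivity
      have := rpow_half_nat h' 7
      norm_num [Real.sqrt_sq hr.le] at this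
      exact this
    rw [hE3 r hr, e1, e2]
    have hA7 : (q ^ 2 * ℓ ^ 2 + r ^ 2) ^ ((7:ℝ)/2) ≠ 0 := by
      exact (Real.rpow_pos_of_pos hA _).ne'
    ring
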